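/- Let a_0, a_1, …, a_n be independent real random variables with mean zero and variance one, and for 0 ≤ j < 2n define d_j = (2n)^{-1/2}[√2·a_0 + (−1)^j·√2·a_n + 2Σ_{k=1}^{n−1} a_k cos(2πjk/(2n))]. Then d_j = d_{2n−j} for 0 < j < 2n, each d_j has mean 0, and for 0 ≤ j, k ≤ n: E[d_j d_k] = 2 if j = k ∈ {0, n}, E[d_j d_k] = 1 if 0 < j = k < n, and E[d_j d_k] = 0 if j ≠ k. -/

import Mathlib

open MeasureTheory ProbabilityTheory Real

lemma tel_sum (N : ℕ) (x : ℝ) :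
    ∑ m ∈ Finset.range N, 2 * Real.sin x * Real.cos (2 * m * x)
      = Real.sin (2 * N * x - x) + Real.sin x := by
  have h := Finset.sum_range_sub (fun m : ℕ => Real.sin (2 * m * x - x)) N
  have e : ∀ m ∈ Finset.range N,
      2 * Real.sin x * Real.cos (2 * m * x)
        = Real.sin (2 * (m+1 : ℕ) * x - x) - Real.sin (2 * m * x - x) := by
    intro m _
    rw [Real.sin_sub_sin]
    push_cast
    ring_nf
  rw [Finset.sum_congr rfl e, h]
  simp [Real.sin_neg]

lemma cos_sum_eval (n : ℕ) (hn : 0 < n) (l : ℤ) :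
    ∑ m ∈ Finset.range n, Real.cos (π * l * m / n)
      = if (2 * (n:ℤ)) ∣ l then (n : ℝ) else if Even l then 0 else 1 := by
  have hn' : (n : ℝ) ≠ 0 := by positivity
  by_cases hdvd : (2 * (n:ℤ)) ∣ l
  · obtain ⟨t, ht⟩ := hdvd
    rw [if_pos ⟨t, ht⟩]
    have e : ∀ m ∈ Finset.range n, Real.cos (π * l * m / n) = 1 := by
      intro m _
      have harg : (π * l * m / n : ℝ) = ((t * m : ℤ) : ℝ) * (2 * π) := by
        subst ht; push_cast; field_simp
      rw [harg, Real.cos_int_mul_two_pi]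
    rw [Finset.sum_congr rfl e]
    simp
  · rw [if_neg hdvd]
    set x := π * l / (2 * n) with hx
    have hsin : Real.sin x ≠ 0 := by
      intro h
      rw [Real.sin_eq_zero_iff] at h
      obtain ⟨m, hm⟩ := h
      apply hdvd
      refine ⟨m, ?_⟩
      have hπ : (π : ℝ) ≠ 0 := Real.pi_ne_zero
      rw [hx, eq_div_iff (by positivity : (2 * (n:ℝ)) ≠ 0)] at hm
      have h2 : π * (2 * (n:ℝ) * m) = π * l := by linear_combination hm
      have h3 := mul_left_cancel₀ hπ h2
      have h4 : (l : ℝ) = ((2 * n * m : ℤ) : ℝ) := by push_cast; linarith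
      exact_mod_cast h4
    have key := tel_sum n x
    have e : ∀ m ∈ Finset.range n,
        2 * Real.sin x * Real.cos (2 * m * x) = 2 * Real.sin x * Real.cos (π * l * m / n) := by
      intro m _
      congr 1
      rw [hx]; field_simp
    rw [Finset.sum_congr rfl e] at key
    have h2n : 2 * (n:ℝ) * x = (l:ℝ) * π := by rw [hx]; field_simp
    rw [h2n] at key
    rw [Real.sin_int_mul_pi_sub] at key
    rw [← Finset.mul_sum] at key
    rcases Int.even_or_odd l with he | ho
    · rw [if_pos he]
      rw [he.neg_one_zpow] at key
      have h0 : 2 * Real.sin x * ∑ m ∈ Finset.range n, Real.cos (π * l * m / n) = 0 := by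
        rw [key]; ring
      exact (mul_eq_zero.mp h0).resolve_left (mul_ne_zero two_ne_zero hsin)
    · rw [if_neg (Int.not_even_iff_odd.mpr ho)]
      rw [ho.neg_one_zpow] at key
      have h1 : 2 * Real.sin x * ∑ m ∈ Finset.range n, Real.cos (π * l * m / n)
          = 2 * Real.sin x * 1 := by rw [key]; ring
      exact mul_left_cancel₀ (mul_ne_zero two_ne_zero hsin) h1

/-- value of `∑_{m=1}^{n-1} cos (π l m / n)`. -/
noncomputable def trigS (n : ℕ) (l : ℤ) : ℝ :=
  (if (2 * (n:ℤ)) ∣ l then (n : ℝ) else if Even l then 0 else 1) - 1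

lemma cos_sum_Icc (n : ℕ) (hn : 1 ≤ n) (l : ℤ) :
    ∑ m ∈ Finset.Icc 1 (n-1), Real.cos (π * l * m / n) = trigS n l := by
  have hr : Finset.range n = insert 0 (Finset.Icc 1 (n-1)) := by
    ext m; simp only [Finset.mem_range, Finset.mem_insert, Finset.mem_Icc]; omega
  have h := cos_sum_eval n hn l
  rw [hr, Finset.sum_insert (by simp)] at h
  simp only [Nat.cast_zero, mul_zero, zero_div, Real.cos_zero] at h
  rw [trigS]
  linarith

lemma trigS_dvd (n : ℕ) (l : ℤ) (h : (2 * (n:ℤ)) ∣ l) : trigS n l = (n : ℝ) - 1 := by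
  rw [trigS, if_pos h]

lemma trigS_even (n : ℕ) (l : ℤ) (h : ¬ (2 * (n:ℤ)) ∣ l) (he : Even l) : trigS n l = -1 := by
  rw [trigS, if_neg h, if_pos he]; ring

lemma trigS_odd (n : ℕ) (hn : 1 ≤ n) (l : ℤ) (ho : Odd l) : trigS n l = 0 := by
  have h : ¬ (2 * (n:ℤ)) ∣ l := by
    intro hd
    have : (2:ℤ) ∣ l := dvd_trans ⟨(n:ℤ), rfl⟩ hd
    exact (Int.not_even_iff_odd.mpr ho) (even_iff_two_dvd.mpr this)
  rw [trigS, if_neg h, if_neg (Int.not_even_iff_odd.mpr ho)]; ring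

/-- coefficients of the eigenvalue expansion -/
noncomputable def circCoef (n j i : ℕ) : ℝ :=
  (1 / Real.sqrt (2*n)) *
    (if i = 0 then Real.sqrt 2 else if i = n then (-1:ℝ)^j * Real.sqrt 2
      else 2 * Real.cos (2 * π * j * i / (2*n)))

theorem circulant_eigenvalue_covariances
    {Ω : Type*} [MeasurableSpace Ω] (μ : Measure Ω) [IsProbabilityMeasure μ]
    (n : ℕ) (hn : 1 ≤ n) (a : ℕ → Ω → ℝ)
    (hmeas : ∀ i, Measurable (a i))
    (hindep : iIndepFun (fun i : Fin (n + 1) => a i) μ)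
    (hL2 : ∀ i ≤ n, MemLp (a i) 2 μ)
    (hmean : ∀ i ≤ n, ∫ ω, a i ω ∂μ = 0)
    (hvar : ∀ i ≤ n, ∫ ω, (a i ω) ^ 2 ∂μ = 1)
    (d : ℕ → Ω → ℝ)
    (hd : ∀ j < 2 * n, d j = fun ω =>
      (1 / Real.sqrt (2 * n)) *
        (Real.sqrt 2 * a 0 ω + (-1 : ℝ) ^ j * Real.sqrt 2 * a n ω
          + 2 * ∑ k ∈ Finset.Icc 1 (n - 1), a k ω * Real.cos (2 * π * j * k / (2 * n)))) :
    (∀ j, 0 < j → j < 2 * n → d j = d (2 * n - j)) ∧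
    (∀ j ≤ n, ∫ ω, d j ω ∂μ = 0) ∧
    (∀ j k : ℕ, j ≤ n → k ≤ n →
      ∫ ω, d j ω * d k ω ∂μ =
        if j = k then (if j = 0 ∨ j = n then 2 else 1) else 0) := by
  have hnR : (0:ℝ) < (n:ℝ) := by exact_mod_cast hn
  have hnR' : (n:ℝ) ≠ 0 := ne_of_gt hnR
  have hsne : Real.sqrt (2*(n:ℝ)) ≠ 0 := by positivity
  have hinv : (1 / Real.sqrt (2*(n:ℝ))) * (1 / Real.sqrt (2*(n:ℝ))) = 1 / (2*(n:ℝ)) := by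
    rw [div_mul_div_comm, one_mul, Real.mul_self_sqrt (by positivity)]
  -- splitting of the index set
  have hsplit : Finset.range (n+1) = insert 0 (insert n (Finset.Icc 1 (n-1))) := by
    ext m; simp only [Finset.mem_range, Finset.mem_insert, Finset.mem_Icc]; omega
  have h0notin : (0:ℕ) ∉ insert n (Finset.Icc 1 (n-1)) := by
    simp only [Finset.mem_insert, Finset.mem_Icc]; omega
  have hnnotin : n ∉ Finset.Icc 1 (n-1) := by
    simp only [Finset.mem_Icc]; omega
  -- representation of d j as a linear combination
  have hrep : ∀ j ≤ n, d j = fun ω => ∑ i ∈ Finset.range (n+1), circCoef n j i * a i ω := by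
    intro j hj
    rw [hd j (by omega)]
    funext ω
    rw [hsplit, Finset.sum_insert h0notin, Finset.sum_insert hnnotin]
    have hmid : ∀ i ∈ Finset.Icc 1 (n-1), circCoef n j i * a i ω
        = ((1 / Real.sqrt (2*(n:ℝ))) * 2) * (a i ω * Real.cos (2 * π * j * i / (2*(n:ℝ)))) := by
      intro i hi
      simp only [Finset.mem_Icc] at hi
      rw [circCoef, if_neg (by omega : i ≠ 0), if_neg (by omega : i ≠ n)]
      push_cast
      ring
    rw [Finset.sum_congr rfl hmid, ← Finset.mul_sum]
    rw [circCoef, if_pos rfl]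
    rw [circCoef, if_neg (by omega : n ≠ 0), if_pos rfl]
    push_cast
    ring
  -- integrability
  have hint : ∀ i ≤ n, Integrable (a i) μ := fun i hi => (hL2 i hi).integrable (by norm_num)
  have hintmul : ∀ i ≤ n, ∀ i' ≤ n, Integrable (fun ω => a i ω * a i' ω) μ := by
    intro i hi i' hi'
    have h := (hL2 i' hi').smul (r := 1) (hL2 i hi)
    have h2 := memLp_one_iff_integrable.mp h
    exact h2
  -- moments
  have hmom : ∀ i ≤ n, ∀ i' ≤ n, (∫ ω, a i ω * a i' ω ∂μ) = if i = i' then 1 else 0 := by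
    intro i hi i' hi'
    by_cases h : i = i'
    · subst h
      rw [if_pos rfl]
      have := hvar i hi
      simpa [pow_two] using this
    · rw [if_neg h]
      have hne : (⟨i, by omega⟩ : Fin (n+1)) ≠ ⟨i', by omega⟩ := by
        intro hh
        exact h (by simpa using congrArg Fin.val hh)
      have hIF : IndepFun (a i) (a i') μ := hindep.indepFun hne
      have hI := hIF.integral_fun_mul_eq_mul_integral (hmeas i).aestronglyMeasurable (hmeas i').aestronglyMeasurable
      calc (∫ ω, a i ω * a i' ω ∂μ) = (∫ ω, a i ω ∂μ) * (∫ ω, a i' ω ∂μ) := hI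
        _ = 0 := by rw [hmean i hi, hmean i' hi']; ring
  -- covariance as a coefficient sum
  have hcov0 : ∀ j ≤ n, ∀ k ≤ n, (∫ ω, d j ω * d k ω ∂μ)
      = ∑ i ∈ Finset.range (n+1), circCoef n j i * circCoef n k i := by
    intro j hj k hk
    have hmem : ∀ i ∈ Finset.range (n+1), i ≤ n := fun i hi =>
      Nat.lt_succ_iff.mp (Finset.mem_range.mp hi)
    simp only [hrep j hj, hrep k hk]
    have hexp : (fun ω => (∑ i ∈ Finset.range (n+1), circCoef n j i * a i ω)
          * (∑ i' ∈ Finset.range (n+1), circCoef n k i' * a i' ω))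
        = fun ω => ∑ i ∈ Finset.range (n+1), ∑ i' ∈ Finset.range (n+1),
            (circCoef n j i * circCoef n k i') * (a i ω * a i' ω) := by
      funext ω
      rw [Finset.sum_mul_sum]
      exact Finset.sum_congr rfl fun i _ => Finset.sum_congr rfl fun i' _ => by ring
    calc (∫ ω, (∑ i ∈ Finset.range (n+1), circCoef n j i * a i ω)
          * (∑ i' ∈ Finset.range (n+1), circCoef n k i' * a i' ω) ∂μ)
        = ∑ i ∈ Finset.range (n+1), ∫ ω, ∑ i' ∈ Finset.range (n+1),
            (circCoef n j i * circCoef n k i') * (a i ω * a i' ω) ∂μ := by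
          rw [show (fun ω => (∑ i ∈ Finset.range (n+1), circCoef n j i * a i ω)
              * (∑ i' ∈ Finset.range (n+1), circCoef n k i' * a i' ω)) = _ from hexp]
          exact integral_finset_sum _ (fun i hi => integrable_finset_sum _
            (fun i' hi' => ((hintmul i (hmem i hi) i' (hmem i' hi'))).const_mul _))
      _ = ∑ i ∈ Finset.range (n+1), ∑ i' ∈ Finset.range (n+1),
            (circCoef n j i * circCoef n k i') * ∫ ω, a i ω * a i' ω ∂μ := by
          refine Finset.sum_congr rfl fun i hi => ?_
          rw [integral_finset_sum _ (fun i' hi' =>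
            ((hintmul i (hmem i hi) i' (hmem i' hi'))).const_mul _)]
          exact Finset.sum_congr rfl fun i' hi' => integral_const_mul _ _
      _ = ∑ i ∈ Finset.range (n+1), circCoef n j i * circCoef n k i := by
          refine Finset.sum_congr rfl fun i hi => ?_
          have e2 : ∀ i' ∈ Finset.range (n+1),
              (circCoef n j i * circCoef n k i') * (∫ ω, a i ω * a i' ω ∂μ)
                = if i = i' then circCoef n j i * circCoef n k i' else 0 := by
            intro i' hi'
            rw [hmom i (hmem i hi) i' (hmem i' hi'), mul_ite, mul_one, mul_zero]
          rw [Finset.sum_congr rfl e2, Finset.sum_ite_eq, if_pos hi]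
  -- evaluation of the coefficient sum
  have key : ∀ j ≤ n, ∀ k ≤ n,
      ∑ i ∈ Finset.range (n+1), circCoef n j i * circCoef n k i
        = (1/(2*(n:ℝ))) * (2 + 2 * (-1:ℝ)^(j+k)
            + 2 * (trigS n ((j:ℤ)+k) + trigS n ((j:ℤ)-k))) := by
    intro j hj k hk
    rw [hsplit, Finset.sum_insert h0notin, Finset.sum_insert hnnotin]
    have hmid : ∀ i ∈ Finset.Icc 1 (n-1), circCoef n j i * circCoef n k i
        = (1/(2*(n:ℝ)) * 2) * (Real.cos (π * (((j:ℤ) + (k:ℤ) : ℤ) : ℝ) * i / n)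
            + Real.cos (π * (((j:ℤ) - (k:ℤ) : ℤ) : ℝ) * i / n)) := by
      intro i hi
      simp only [Finset.mem_Icc] at hi
      rw [circCoef, if_neg (by omega : i ≠ 0), if_neg (by omega : i ≠ n),
        circCoef, if_neg (by omega : i ≠ 0), if_neg (by omega : i ≠ n)]
      have hA : π * (((j:ℤ) + (k:ℤ) : ℤ) : ℝ) * i / n
          = 2 * π * j * i / (2*(n:ℝ)) + 2 * π * k * i / (2*(n:ℝ)) := by
        push_cast; field_simp
      have hB : π * (((j:ℤ) - (k:ℤ) : ℤ) : ℝ) * i / n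
          = 2 * π * j * i / (2*(n:ℝ)) - 2 * π * k * i / (2*(n:ℝ)) := by
        push_cast; field_simp
      rw [hA, hB, Real.cos_add, Real.cos_sub]
      push_cast
      linear_combination (4 * Real.cos (2 * π * (j:ℝ) * (i:ℝ) / (2*(n:ℝ)))
        * Real.cos (2 * π * (k:ℝ) * (i:ℝ) / (2*(n:ℝ)))) * hinv
    rw [Finset.sum_congr rfl hmid, ← Finset.mul_sum, Finset.sum_add_distrib]
    rw [cos_sum_Icc n hn ((j:ℤ)+k), cos_sum_Icc n hn ((j:ℤ)-k)]
    rw [circCoef, if_pos rfl, circCoef, if_pos rfl,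
      circCoef, if_neg (by omega : n ≠ 0), if_pos rfl,
      circCoef, if_neg (by omega : n ≠ 0), if_pos rfl]
    have h2 : Real.sqrt 2 * Real.sqrt 2 = 2 := Real.mul_self_sqrt (by norm_num)
    have hpow : (-1:ℝ)^(j+k) = (-1:ℝ)^j * (-1:ℝ)^k := pow_add _ _ _
    push_cast
    rw [hpow]
    linear_combination (Real.sqrt 2 * Real.sqrt 2 + (-1:ℝ)^j * (-1:ℝ)^k * (Real.sqrt 2 * Real.sqrt 2)) * hinv
      + (1/(2*(n:ℝ)) * (1 + (-1:ℝ)^j * (-1:ℝ)^k)) * h2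
  refine ⟨?_, ?_, ?_⟩
  · -- symmetry
    intro j hj0 hj2
    rw [hd j hj2, hd (2*n - j) (by omega)]
    funext ω
    have hcast : ((2*n - j : ℕ) : ℝ) = 2*(n:ℝ) - j := by
      rw [Nat.cast_sub (by omega : j ≤ 2*n)]; push_cast; ring
    have hpow : ((-1:ℝ))^(2*n - j) = (-1:ℝ)^j := by
      rcases Nat.even_or_odd j with h | h
      · rw [h.neg_one_pow, (show Even (2*n - j) from Nat.even_iff.mpr (by
          have := Nat.even_iff.mp h; omega)).neg_one_pow]
      · rw [h.neg_one_pow, (show Odd (2*n - j) from Nat.odd_iff.mpr (by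
          have := Nat.odd_iff.mp h; omega)).neg_one_pow]
    have hcos : ∀ m ∈ Finset.Icc 1 (n-1),
        a m ω * Real.cos (2 * π * ((2*n - j : ℕ):ℝ) * m / (2*(n:ℝ)))
          = a m ω * Real.cos (2 * π * j * m / (2*(n:ℝ))) := by
      intro m _
      congr 1
      have harg : 2 * π * ((2*n - j : ℕ):ℝ) * m / (2*(n:ℝ))
          = ((m:ℤ):ℝ) * (2*π) - 2 * π * j * m / (2*(n:ℝ)) := by
        rw [hcast]; push_cast; field_simp
      rw [harg, Real.cos_int_mul_two_pi_sub]
    rw [hpow, Finset.sum_congr rfl hcos]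
  · -- mean
    intro j hj
    rw [hrep j hj]
    rw [integral_finset_sum _ (fun i hi =>
      (hint i (Nat.lt_succ_iff.mp (Finset.mem_range.mp hi))).const_mul _)]
    refine Finset.sum_eq_zero fun i hi => ?_
    rw [integral_const_mul, hmean i (Nat.lt_succ_iff.mp (Finset.mem_range.mp hi)), mul_zero]
  · -- covariance
    intro j k hj hk
    rw [hcov0 j hj k hk, key j hj k hk]
    by_cases hjk : j = k
    · subst hjk
      rw [if_pos rfl]
      have hT2 : trigS n ((j:ℤ) - j) = (n:ℝ) - 1 := by
        rw [show ((j:ℤ) - j) = 0 by ring]; exact trigS_dvd n 0 (dvd_zero _)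
      have hpow : (-1:ℝ)^(j+j) = 1 := Even.neg_one_pow ⟨j, rfl⟩
      by_cases h0n : j = 0 ∨ j = n
      · rw [if_pos h0n]
        have hT1 : trigS n ((j:ℤ) + j) = (n:ℝ) - 1 := by
          refine trigS_dvd n _ ?_
          rcases h0n with h | h
          · subst h; simp
          · subst h; exact ⟨1, by ring⟩
        rw [hT1, hT2, hpow]
        field_simp
        ring
      · rw [if_neg h0n]
        push_neg at h0n
        have hnd : ¬ (2 * (n:ℤ)) ∣ ((j:ℤ) + j) := by
          intro hdvd
          have h1 := Int.le_of_dvd (by omega) hdvd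
          omega
        have hT1 : trigS n ((j:ℤ) + j) = -1 :=
          trigS_even n _ hnd ⟨j, rfl⟩
        rw [hT1, hT2, hpow]
        field_simp
        ring
    · rw [if_neg hjk]
      have hnd1 : ¬ (2 * (n:ℤ)) ∣ ((j:ℤ) + k) := by
        intro hdvd
        have h1 := Int.le_of_dvd (by omega) hdvd
        omega
      have hnd2 : ¬ (2 * (n:ℤ)) ∣ ((j:ℤ) - k) := by
        intro hdvd
        have h2 := Nat.le_of_dvd (by omega) (Int.natAbs_dvd_natAbs.mpr hdvd)
        omega
      rcases Nat.even_or_odd (j+k) with hp | hp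
      · have hev1 : Even ((j:ℤ) + k) := by
          have : Even (((j+k : ℕ)):ℤ) := (Int.even_coe_nat _).mpr hp
          push_cast at this
          exact this
        have hev2 : Even ((j:ℤ) - k) := by
          rw [Int.even_sub]
          exact Int.even_add.mp hev1
        rw [trigS_even n _ hnd1 hev1, trigS_even n _ hnd2 hev2, hp.neg_one_pow]
        norm_num
      · have hod1 : Odd ((j:ℤ) + k) := by
          have : Odd (((j+k : ℕ)):ℤ) := (Int.odd_coe_nat _).mpr hp
          push_cast at this
          exact this
        have hod2 : Odd ((j:ℤ) - k) := by
          rcases Int.even_or_odd ((j:ℤ) - k) with h | h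
          · exfalso
            have := Int.even_add.mp (by have : ((j:ℤ) - k) + 2*k = (j:ℤ) + k := by ring
                                        rw [← this]
                                        exact h.add ⟨(k:ℤ), by ring⟩)
            exact (Int.not_even_iff_odd.mpr hod1) (by
              rw [Int.even_add]; exact this)
          · exact h
        rw [trigS_odd n hn _ hod1, trigS_odd n hn _ hod2, hp.neg_one_pow]
        ring
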